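/- (Strict decrease of the maximum violation under SHRINK.) Suppose s ∉ 𝒮(Δ), the shrinking set 𝒢 is nonempty and proper, v_i(s) = u for all i ∈ 𝒢, and v_i(s) > v_j(s) for all i ∈ 𝒢 and j ∉ 𝒢. Then max_{1≤i≤q} v_i(s_*) < u = max_{1≤i≤q} v_i(s). -/

import Mathlib

/-- Coordinate projection: `(proj I x) j = x j` if `j ∈ I`, else `0`. -/
noncomputable def proj {n : ℕ} (I : Finset (Fin n)) (x : EuclideanSpace ℝ (Fin n)) :
    EuclideanSpace ℝ (Fin n) :=
  WithLp.toLp 2 (fun j => if j ∈ I then x j else 0)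

lemma norm_proj_sq {n : ℕ} (I : Finset (Fin n)) (x : EuclideanSpace ℝ (Fin n)) :
    ‖proj I x‖ ^ 2 = ∑ j ∈ I, (x j) ^ 2 := by
  have h : ∀ j : Fin n, ‖proj I x j‖ ^ 2 = if j ∈ I then x j ^ 2 else 0 := fun j => by
    by_cases hj : j ∈ I <;> simp [proj, hj, sq_abs]
  rw [EuclideanSpace.norm_eq, Real.sq_sqrt (by positivity)]
  simp_rw [h, Finset.sum_ite_mem, Finset.univ_inter]

/-- Strict decrease of the maximum violation ratio under the SHRINK subroutine:
`max_i v_i(s_*) < u = max_i v_i(s)`. -/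
theorem shrink_max_viol_lt {n q : ℕ} (I : Fin q → Finset (Fin n)) (Δ : Fin q → ℝ)
    (hΔ : ∀ i, 0 < Δ i) (s : EuclideanSpace ℝ (Fin n)) (u : ℝ)
    (𝒢 : Finset (Fin q)) (h𝒢ne : 𝒢.Nonempty) (h𝒢pr : 𝒢 ≠ Finset.univ)
    (hsout : ¬ (∀ i, ‖proj (I i) s‖ ≤ Δ i))
    (hvG : ∀ i ∈ 𝒢, ‖proj (I i) s‖ / Δ i = u)
    (hvlt : ∀ i ∈ 𝒢, ∀ j ∉ 𝒢, ‖proj (I j) s‖ / Δ j < ‖proj (I i) s‖ / Δ i)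
    (IG : Finset (Fin n)) (hIG : IG = 𝒢.biUnion I)
    (tf : Fin q → ℝ)
    (htf : ∀ i, tf i = if i ∈ 𝒢 then 1 / u
      else max (1 / u)
        (‖proj (I i \ IG) s‖ / Real.sqrt (u ^ 2 * Δ i ^ 2 - ‖proj (I i ∩ IG) s‖ ^ 2)))
    (tstar : ℝ)
    (htstar : tstar = Finset.univ.sup' (h𝒢ne.mono (Finset.subset_univ 𝒢)) tf)
    (sstar : EuclideanSpace ℝ (Fin n))
    (hsstar : sstar = s + (tstar - 1) • proj IG s) :
    Finset.univ.sup' (h𝒢ne.mono (Finset.subset_univ 𝒢))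
        (fun i => ‖proj (I i) sstar‖ / Δ i) < u ∧
    u = Finset.univ.sup' (h𝒢ne.mono (Finset.subset_univ 𝒢))
        (fun i => ‖proj (I i) s‖ / Δ i) := by
  obtain ⟨i0, hi0⟩ := h𝒢ne
  obtain ⟨k, hk⟩ := not_forall.mp hsout
  have hk' : Δ k < ‖proj (I k) s‖ := lt_of_not_ge hk
  have hu1 : 1 < u := by
    by_cases hkG : k ∈ 𝒢
    · rw [← hvG k hkG]; exact (one_lt_div (hΔ k)).mpr hk'
    · have h := hvlt i0 hi0 k hkG
      rw [hvG i0 hi0] at h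
      exact lt_trans ((one_lt_div (hΔ k)).mpr hk') h
  have hu0 : 0 < u := lt_trans one_pos hu1
  have hsub : ∀ i ∈ 𝒢, I i ⊆ IG := fun i hi => hIG ▸ Finset.subset_biUnion_of_mem I hi
  have hpyth : ∀ i, ‖proj (I i ∩ IG) s‖ ^ 2 + ‖proj (I i \ IG) s‖ ^ 2 = ‖proj (I i) s‖ ^ 2 := by
    intro i
    rw [norm_proj_sq, norm_proj_sq, norm_proj_sq, Finset.sum_inter_add_sum_sdiff]
  have hvj : ∀ j, j ∉ 𝒢 → ‖proj (I j) s‖ < u * Δ j := by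
    intro j hj
    have h := hvlt i0 hi0 j hj
    rw [hvG i0 hi0] at h
    exact (div_lt_iff₀ (hΔ j)).mp h
  have hD : ∀ j, j ∉ 𝒢 → ‖proj (I j \ IG) s‖ ^ 2 < u ^ 2 * Δ j ^ 2 - ‖proj (I j ∩ IG) s‖ ^ 2 := by
    intro j hj
    have h1 : ‖proj (I j) s‖ ^ 2 < u ^ 2 * Δ j ^ 2 := by
      nlinarith [hvj j hj, norm_nonneg (proj (I j) s), hΔ j, hu0]
    nlinarith [hpyth j]
  have htfpos : 0 < tf i0 := by rw [htf i0, if_pos hi0]; positivity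
  have htstarge : ∀ i, tf i ≤ tstar := fun i =>
    htstar ▸ Finset.le_sup' tf (Finset.mem_univ i)
  have htstarpos : 0 < tstar := lt_of_lt_of_le htfpos (htstarge i0)
  have htflt1 : ∀ i, tf i < 1 := by
    intro i
    rw [htf i]
    split
    · rw [div_lt_one hu0]; exact hu1
    · rename_i hi
      apply max_lt
      · rw [div_lt_one hu0]; exact hu1
      · have hDpos : 0 < u ^ 2 * Δ i ^ 2 - ‖proj (I i ∩ IG) s‖ ^ 2 :=
          lt_of_le_of_lt (by positivity) (hD i hi)
        rw [div_lt_one (Real.sqrt_pos.mpr hDpos)]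
        calc ‖proj (I i \ IG) s‖ = Real.sqrt (‖proj (I i \ IG) s‖ ^ 2) :=
              (Real.sqrt_sq (norm_nonneg _)).symm
          _ < _ := Real.sqrt_lt_sqrt (by positivity) (hD i hi)
  have htstarlt1 : tstar < 1 := by
    rw [htstar, Finset.sup'_lt_iff]
    exact fun i _ => htflt1 i
  have hnorm : ∀ i, ‖proj (I i) sstar‖ ^ 2
      = tstar ^ 2 * ‖proj (I i ∩ IG) s‖ ^ 2 + ‖proj (I i \ IG) s‖ ^ 2 := by
    intro i
    rw [norm_proj_sq, norm_proj_sq, norm_proj_sq,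
      ← Finset.sum_inter_add_sum_sdiff (I i) IG (fun j => sstar j ^ 2), Finset.mul_sum]
    congr 1
    · apply Finset.sum_congr rfl
      intro j hj
      have hjIG : j ∈ IG := (Finset.mem_inter.mp hj).2
      have hval : sstar j = tstar * s j := by
        rw [hsstar]
        simp [proj, hjIG, PiLp.add_apply, PiLp.smul_apply, smul_eq_mul]
        ring
      rw [hval]; ring
    · apply Finset.sum_congr rfl
      intro j hj
      have hjIG : j ∉ IG := (Finset.mem_sdiff.mp hj).2
      have hval : sstar j = s j := by
        rw [hsstar]
        simp [proj, hjIG, PiLp.add_apply, PiLp.smul_apply, smul_eq_mul]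
      rw [hval]
  have hbound : ∀ i, ‖proj (I i) sstar‖ / Δ i < u := by
    intro i
    rw [div_lt_iff₀ (hΔ i)]
    have key : ‖proj (I i) sstar‖ ^ 2 ≤ (tstar * (u * Δ i)) ^ 2 := by
      by_cases hi : i ∈ 𝒢
      · have h1 : I i ∩ IG = I i := Finset.inter_eq_left.mpr (hsub i hi)
        have h2 : I i \ IG = ∅ := Finset.sdiff_eq_empty_iff_subset.mpr (hsub i hi)
        have h3 : ‖proj (I i) s‖ = u * Δ i := (div_eq_iff (hΔ i).ne').mp (hvG i hi)
        have h4 : ‖proj ((∅ : Finset (Fin n))) s‖ ^ 2 = 0 := by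
          rw [norm_proj_sq]; simp
        rw [hnorm i, h1, h2, h4, h3]; ring_nf; rfl
      · have hDpos : 0 < u ^ 2 * Δ i ^ 2 - ‖proj (I i ∩ IG) s‖ ^ 2 :=
          lt_of_le_of_lt (by positivity) (hD i hi)
        have hr : ‖proj (I i \ IG) s‖ / Real.sqrt (u ^ 2 * Δ i ^ 2 - ‖proj (I i ∩ IG) s‖ ^ 2)
            ≤ tstar := by
          refine le_trans ?_ (htstarge i)
          rw [htf i, if_neg hi]
          exact le_max_right _ _
        have hsq : 0 < Real.sqrt (u ^ 2 * Δ i ^ 2 - ‖proj (I i ∩ IG) s‖ ^ 2) :=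
          Real.sqrt_pos.mpr hDpos
        have hle : ‖proj (I i \ IG) s‖ ≤ tstar * Real.sqrt (u ^ 2 * Δ i ^ 2 - ‖proj (I i ∩ IG) s‖ ^ 2) :=
          (div_le_iff₀ hsq).mp hr
        have hsqsq : (Real.sqrt (u ^ 2 * Δ i ^ 2 - ‖proj (I i ∩ IG) s‖ ^ 2)) ^ 2
            = u ^ 2 * Δ i ^ 2 - ‖proj (I i ∩ IG) s‖ ^ 2 := Real.sq_sqrt (le_of_lt hDpos)
        have hle2 : ‖proj (I i \ IG) s‖ ^ 2 ≤ tstar ^ 2 * (u ^ 2 * Δ i ^ 2 - ‖proj (I i ∩ IG) s‖ ^ 2) := by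
          nlinarith [norm_nonneg (proj (I i \ IG) s), hsq.le]
        rw [hnorm i]
        nlinarith [norm_nonneg (proj (I i ∩ IG) s)]
    have h4 : ‖proj (I i) sstar‖ ≤ tstar * (u * Δ i) := by
      calc ‖proj (I i) sstar‖ = Real.sqrt (‖proj (I i) sstar‖ ^ 2) :=
            (Real.sqrt_sq (norm_nonneg _)).symm
        _ ≤ Real.sqrt ((tstar * (u * Δ i)) ^ 2) := Real.sqrt_le_sqrt key
        _ = tstar * (u * Δ i) :=
            Real.sqrt_sq (mul_nonneg htstarpos.le (mul_nonneg hu0.le (hΔ i).le))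
    nlinarith [h4, htstarlt1, mul_pos hu0 (hΔ i)]
  constructor
  · rw [Finset.sup'_lt_iff]
    exact fun i _ => hbound i
  · apply le_antisymm
    · rw [← hvG i0 hi0]
      exact Finset.le_sup' (fun i => ‖proj (I i) s‖ / Δ i) (Finset.mem_univ i0)
    · apply Finset.sup'_le
      intro i _
      by_cases hi : i ∈ 𝒢
      · exact le_of_eq (hvG i hi)
      · have h := hvlt i0 hi0 i hi
        rw [hvG i0 hi0] at h
        exact le_of_lt h
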